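/- arXiv:2301.02814 — 5 statements merged into one kernel-verified Lean document; each statement's English description precedes it below -/
import Mathlib

section
/- Let M be a metric space and X a finite subset of M. Let X_opt ⊆ X with |X \ X_opt| ≤ z, and suppose X_opt ⊆ ⋃_{j=1}^{k} C_j where each C_j ⊆ closedBall(c_j, r) for centers c_j ∈ M and r ≥ 0. Let Q ⊆ X and E ⊆ X satisfy d(p, q) > 2r for all p ∈ Q and q ∈ E. Then: (i) for every index j with E ∩ C_j ≠ ∅ one has Q ∩ C_j = ∅, so Q ∩ X_opt is contained in the union of those clusters C_j that E does not intersect; and (ii) |Q ∩ X_opt| ≥ |Q| − z. In particular, if |Q| ≥ (1+ε)·z for some ε > 0, then |Q ∩ X_opt| ≥ (ε/(1+ε))·|Q|. -/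
/-- The deterministic core of Lemma 2 of the paper. `X` is the data set, `Xopt` the
inliers (so at most `z` outliers), with `Xopt` covered by the optimal clusters
`C j ⊆ closedBall (c j) r`. If every point of `Q` is at distance more than `2r` from `E`,
then (i) `Q` avoids every cluster met by `E` (hence `Q ∩ Xopt` lies in the union of the
clusters missed by `E`), (ii) `|Q ∩ Xopt| ≥ |Q| − z`, and in particular if
`|Q| ≥ (1+ε)z` then `|Q ∩ Xopt| ≥ (ε/(1+ε))·|Q|`. -/
theorem far_points_hit_new_cluster {M : Type*} [MetricSpace M] [DecidableEq M]
    (X Xopt Q E : Finset M) (k z : ℕ) (hk : 1 ≤ k)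
    (c : Fin k → M) (r : ℝ) (hr : 0 ≤ r) (C : Fin k → Set M)
    (hXopt : Xopt ⊆ X) (houtliers : (X \ Xopt).card ≤ z)
    (hcover : ∀ p ∈ Xopt, p ∈ ⋃ j, C j)
    (hC : ∀ j, C j ⊆ Metric.closedBall (c j) r)
    (hQ : Q ⊆ X) (hE : E ⊆ X)
    (hfar : ∀ p ∈ Q, ∀ q ∈ E, 2 * r < dist p q) :
    (∀ j, (∃ q ∈ E, q ∈ C j) → ∀ p ∈ Q, p ∉ C j) ∧
    (∀ p ∈ Q ∩ Xopt, ∃ j, (¬ ∃ q ∈ E, q ∈ C j) ∧ p ∈ C j) ∧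
    ((Q.card : ℝ) - z ≤ ((Q ∩ Xopt).card : ℝ)) ∧
    (∀ ε : ℝ, 0 < ε → (1 + ε) * z ≤ Q.card →
      (ε / (1 + ε)) * Q.card ≤ ((Q ∩ Xopt).card : ℝ)) := by
  have key : ∀ j, (∃ q ∈ E, q ∈ C j) → ∀ p ∈ Q, p ∉ C j := by
    intro j ⟨q, hqE, hqC⟩ p hpQ hpC
    have h1 := hC j hpC
    have h2 := hC j hqC
    simp only [Metric.mem_closedBall] at h1 h2
    have := dist_triangle p (c j) q
    have hf := hfar p hpQ q hqE
    rw [dist_comm (c j) q] at this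
    linarith
  have hcard : (Q.card : ℝ) - z ≤ ((Q ∩ Xopt).card : ℝ) := by
    have hsub : Q \ Xopt ⊆ X \ Xopt := Finset.sdiff_subset_sdiff hQ le_rfl
    have h1 : (Q \ Xopt).card ≤ z := le_trans (Finset.card_le_card hsub) houtliers
    have h2 : Q.card ≤ (Q ∩ Xopt).card + (Q \ Xopt).card := by
      rw [Finset.card_inter_add_card_sdiff]
    have h3 : Q.card ≤ (Q ∩ Xopt).card + z := le_trans h2 (Nat.add_le_add_left h1 _)
    have h4 : (Q.card : ℝ) ≤ ((Q ∩ Xopt).card : ℝ) + z := by exact_mod_cast h3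
    linarith
  refine ⟨key, ?_, hcard, ?_⟩
  · intro p hp
    rw [Finset.mem_inter] at hp
    obtain ⟨j, hj⟩ := Set.mem_iUnion.mp (hcover p hp.2)
    exact ⟨j, fun h => key j h p hp.1 hj, hj⟩
  · intro ε hε hQz
    have h1 : (0:ℝ) < 1 + ε := by linarith
    have : (ε / (1 + ε)) * Q.card ≤ (Q.card : ℝ) - z := by
      rw [div_mul_eq_mul_div, div_le_iff₀ h1]
      nlinarith
    linarith
end

section
/- Let P be a finite set of n points in ℝ^D, let k ≥ 1, z ≥ 1 with γ := z/n ∈ (0,1), let ε ∈ (0, 1/2], α > 0, and let S ⊆ P be nonempty. For centers c : Fin k → ℝ^D and radius r ≥ 0, write Cov(c,r) = {p ∈ ℝ^D : min_j ‖p − c_j‖ ≤ r}. Assume the relative-approximation property: for every c : Fin k → ℝ^D and r ≥ 0, letting π = ℝ^D \ Cov(c,r), one has | |π ∩ P|/n − |π ∩ S|/|S| | ≤ ε·max{ |π ∩ P|/n, γ }. Let r_opt = inf{ r ≥ 0 : ∃ c, |Cov(c,r) ∩ P| ≥ n − z } and assume it is attained by some centers c*. Set z' = (1+ε)·γ·|S|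 and ρ_S = inf{ r ≥ 0 : ∃ c, |Cov(c,r) ∩ S| ≥ |S| − z' }. Suppose centers c^S : Fin k → ℝ^D and radius r_S satisfy |Cov(c^S, r_S) ∩ S| ≥ |S| − (1+ε)·z' and r_S ≤ α·ρ_S. Then r_S ≤ α·r_opt and |Cov(c^S, r_S) ∩ P| ≥ n − ((1+ε)²/(1−ε))·γ·n. -/
open scoped Classical

/-- `Cov c r` is the union of the `k` closed balls of radius `r` around the centers
`c 0, …, c (k-1)`: the set of points whose minimum distance to the centers is at most
`r`. -/
def Cov {D k : ℕ} (c : Fin k → EuclideanSpace ℝ (Fin D)) (r : ℝ) :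
    Set (EuclideanSpace ℝ (Fin D)) :=
  {p | ∃ j, ‖p - c j‖ ≤ r}

set_option maxHeartbeats 1000000 in
/-- The deterministic content of Theorem 5 of the paper: if the sample `S ⊆ P` is a
relative `(ε,γ)`-approximation of `P` with respect to complements of unions of `k`
balls, then any `α`-approximate solution of `(k, z')_ε`-center clustering on `S`
(with `z' = (1+ε)γ|S|`) has radius at most `α·r_opt` and covers all but
`((1+ε)²/(1−ε))·γ·n` points of `P`. -/
theorem uniform_sample_coreset (D n k z : ℕ) (hk : 1 ≤ k) (hz : 1 ≤ z)
    (P : Finset (EuclideanSpace ℝ (Fin D))) (hn : P.card = n)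
    (γ : ℝ) (hγ : γ = (z : ℝ) / n) (hγ0 : 0 < γ) (hγ1 : γ < 1)
    (ε α : ℝ) (hε0 : 0 < ε) (hε1 : ε ≤ 1 / 2) (hα : 0 < α)
    (S : Finset (EuclideanSpace ℝ (Fin D))) (hSP : S ⊆ P) (hSne : S.Nonempty)
    (hrel : ∀ (c : Fin k → EuclideanSpace ℝ (Fin D)) (r : ℝ), 0 ≤ r →
      |((P.filter fun p => p ∉ Cov c r).card : ℝ) / n -
          ((S.filter fun p => p ∉ Cov c r).card : ℝ) / S.card| ≤
        ε * max (((P.filter fun p => p ∉ Cov c r).card : ℝ) / n) γ)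
    (ropt : ℝ)
    (hropt : ropt = sInf {r : ℝ | 0 ≤ r ∧ ∃ c : Fin k → EuclideanSpace ℝ (Fin D),
        n - z ≤ (P.filter fun p => p ∈ Cov c r).card})
    (hattained : ∃ cstar : Fin k → EuclideanSpace ℝ (Fin D),
        n - z ≤ (P.filter fun p => p ∈ Cov cstar ropt).card)
    (z' ρS : ℝ) (hz' : z' = (1 + ε) * γ * S.card)
    (hρS : ρS = sInf {r : ℝ | 0 ≤ r ∧ ∃ c : Fin k → EuclideanSpace ℝ (Fin D),
        (S.card : ℝ) - z' ≤ ((S.filter fun p => p ∈ Cov c r).card : ℝ)})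
    (cS : Fin k → EuclideanSpace ℝ (Fin D)) (rS : ℝ) (hrS0 : 0 ≤ rS)
    (hcov : (S.card : ℝ) - (1 + ε) * z' ≤ ((S.filter fun p => p ∈ Cov cS rS).card : ℝ))
    (happrox : rS ≤ α * ρS) :
    rS ≤ α * ropt ∧
      (n : ℝ) - ((1 + ε) ^ 2 / (1 - ε)) * γ * n ≤
        ((P.filter fun p => p ∈ Cov cS rS).card : ℝ) := by
  have hn0 : 0 < (n : ℝ) := by
    rcases Nat.eq_zero_or_pos n with h | h
    · exfalso; rw [h] at hγ; simp at hγ; rw [hγ] at hγ0; exact lt_irrefl 0 hγ0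
    · exact_mod_cast h
  have hS0 : 0 < (S.card : ℝ) := by exact_mod_cast hSne.card_pos
  have hε' : (0:ℝ) < 1 - ε := by linarith
  have hsplitP : ∀ (c : Fin k → EuclideanSpace ℝ (Fin D)) (r : ℝ),
      (P.filter fun p => p ∈ Cov c r).card + (P.filter fun p => p ∉ Cov c r).card = P.card :=
    fun c r => Finset.card_filter_add_card_filter_not _
  have hsplitS : ∀ (c : Fin k → EuclideanSpace ℝ (Fin D)) (r : ℝ),
      (S.filter fun p => p ∈ Cov c r).card + (S.filter fun p => p ∉ Cov c r).card = S.card :=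
    fun c r => Finset.card_filter_add_card_filter_not _
  obtain ⟨cstar, hcstar⟩ := hattained
  have hroptnn : 0 ≤ ropt := by
    rw [hropt]; exact Real.sInf_nonneg fun r hr => hr.1
  -- Part 1 : rS ≤ α * ropt
  have houtstar : (P.filter fun p => p ∉ Cov cstar ropt).card ≤ z := by
    have := hsplitP cstar ropt; omega
  have hAstar : ((P.filter fun p => p ∉ Cov cstar ropt).card : ℝ) / n ≤ γ := by
    rw [hγ]
    have hzr : (((P.filter fun p => p ∉ Cov cstar ropt).card : ℕ) : ℝ) ≤ (z : ℝ) := by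
      exact_mod_cast houtstar
    exact (div_le_div_iff_of_pos_right hn0).mpr hzr
  have hrel1 := hrel cstar ropt hroptnn
  have hmax1 : max (((P.filter fun p => p ∉ Cov cstar ropt).card : ℝ) / n) γ = γ :=
    max_eq_right hAstar
  rw [hmax1] at hrel1
  have hB1 : ((S.filter fun p => p ∉ Cov cstar ropt).card : ℝ) / S.card ≤ (1 + ε) * γ := by
    have := abs_le.mp hrel1
    linarith [this.2]
  have hcovS1 : (S.card : ℝ) - z' ≤ ((S.filter fun p => p ∈ Cov cstar ropt).card : ℝ) := by
    have hsp := hsplitS cstar ropt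
    have hsp' : ((S.filter fun p => p ∈ Cov cstar ropt).card : ℝ) +
        ((S.filter fun p => p ∉ Cov cstar ropt).card : ℝ) = (S.card : ℝ) := by
      exact_mod_cast hsp
    have houtS1 : ((S.filter fun p => p ∉ Cov cstar ropt).card : ℝ) ≤ (1 + ε) * γ * S.card := by
      have := (div_le_iff₀ hS0).mp hB1
      linarith
    rw [hz']; linarith
  have hρle : ρS ≤ ropt := by
    rw [hρS]
    exact csInf_le ⟨0, fun r hr => hr.1⟩ ⟨hroptnn, cstar, hcovS1⟩
  have part1 : rS ≤ α * ropt := by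
    calc rS ≤ α * ρS := happrox
    _ ≤ α * ropt := by nlinarith
  -- Part 2 : coverage of P
  refine ⟨part1, ?_⟩
  set a : ℝ := ((P.filter fun p => p ∉ Cov cS rS).card : ℝ) with ha
  set b : ℝ := ((S.filter fun p => p ∉ Cov cS rS).card : ℝ) with hb
  have ha0 : 0 ≤ a := by positivity
  have hrel2 := hrel cS rS hrS0
  have hspS : ((S.filter fun p => p ∈ Cov cS rS).card : ℝ) + b = (S.card : ℝ) := by
    rw [hb]; exact_mod_cast hsplitS cS rS
  have hbbound : b ≤ (1 + ε) ^ 2 * γ * S.card := by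
    rw [hz'] at hcov; nlinarith
  have hB2 : b / S.card ≤ (1 + ε) ^ 2 * γ := by
    rw [div_le_iff₀ hS0]; linarith
  have hb0 : 0 ≤ b := by positivity
  have hB2' : 0 ≤ b / S.card := by positivity
  have hAbound : a / n ≤ (1 + ε) ^ 2 / (1 - ε) * γ := by
    rcases le_total (a / n) γ with hc | hc
    · have h1 : γ ≤ (1 + ε) ^ 2 / (1 - ε) * γ := by
        rw [div_mul_eq_mul_div, le_div_iff₀ hε']
        nlinarith [mul_nonneg hγ0.le (mul_nonneg hε0.le hε0.le), mul_nonneg hγ0.le hε0.le]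
      linarith
    · have hmax2 : max (a / n) γ = a / n := max_eq_left hc
      rw [hmax2] at hrel2
      have h2 := (abs_le.mp hrel2).2
      have h3 : (1 - ε) * (a / n) ≤ (1 + ε) ^ 2 * γ := by linarith
      rw [div_mul_eq_mul_div, le_div_iff₀ hε']
      linarith
  have habound : a ≤ (1 + ε) ^ 2 / (1 - ε) * γ * n := by
    have := (div_le_iff₀ hn0).mp hAbound
    linarith
  have hspP : ((P.filter fun p => p ∈ Cov cS rS).card : ℝ) + a = (n : ℝ) := by
    have := hsplitP cS rS
    rw [hn] at this
    rw [ha]; exact_mod_cast this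
  linarith
end

section
/- Let M be a metric space, n, z ∈ ℕ with z < n, δ ≥ 0, and let x, y : Fin n → M be two families of points with d(x_i, y_i) ≤ δ for every i ∈ Fin n. Then for every nonempty finite set H ⊆ M of centers, |cost_z(x, H) − cost_z(y, H)| ≤ δ. -/
/-- The `k`-center clustering cost with `z` outliers of the point family `x : Fin n → M`
with respect to the center set `H`: the minimum over subsets `I ⊆ Fin n` with
`|I| ≥ n - z` of `max_{i ∈ I} min_{c ∈ H} dist (x i) c`, expressed as the infimum
of all feasible radii. -/
noncomputable def kCenterCost {M : Type*} [MetricSpace M] (n z : ℕ)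
    (x : Fin n → M) (H : Finset M) : ℝ :=
  sInf {r : ℝ | ∃ I : Finset (Fin n), n - z ≤ I.card ∧ ∀ i ∈ I, ∃ c ∈ H, dist (x i) c ≤ r}

lemma kCenter_set_nonempty {M : Type*} [MetricSpace M] (n z : ℕ) (hz : z < n)
    (x : Fin n → M) (H : Finset M) (hH : H.Nonempty) :
    {r : ℝ | ∃ I : Finset (Fin n), n - z ≤ I.card ∧ ∀ i ∈ I, ∃ c ∈ H, dist (x i) c ≤ r}.Nonempty := by
  obtain ⟨c0, hc0⟩ := hH
  have hn : 0 < n := lt_of_le_of_lt (Nat.zero_le z) hz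
  have : Nonempty (Fin n) := Fin.pos_iff_nonempty.mp hn
  have hne : (Finset.univ : Finset (Fin n)).Nonempty := Finset.univ_nonempty
  refine ⟨Finset.univ.sup' hne (fun i => dist (x i) c0), Finset.univ, ?_, ?_⟩
  · simp [Finset.card_univ]
  · intro i _
    exact ⟨c0, hc0, Finset.le_sup' (fun j => dist (x j) c0) (Finset.mem_univ i)⟩

lemma kCenter_set_bdd {M : Type*} [MetricSpace M] (n z : ℕ) (hz : z < n)
    (x : Fin n → M) (H : Finset M) :
    BddBelow {r : ℝ | ∃ I : Finset (Fin n), n - z ≤ I.card ∧ ∀ i ∈ I, ∃ c ∈ H, dist (x i) c ≤ r} := by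
  refine ⟨0, fun r hr => ?_⟩
  obtain ⟨I, hcard, hI⟩ := hr
  have hIne : I.Nonempty := by
    rw [← Finset.card_pos]
    exact lt_of_lt_of_le (Nat.sub_pos_of_lt hz) hcard
  obtain ⟨i, hi⟩ := hIne
  obtain ⟨c, _, hc⟩ := hI i hi
  exact le_trans dist_nonneg hc

lemma kCenterCost_le {M : Type*} [MetricSpace M] (n z : ℕ) (hz : z < n) (δ : ℝ)
    (x y : Fin n → M) (hxy : ∀ i : Fin n, dist (x i) (y i) ≤ δ)
    (H : Finset M) (hH : H.Nonempty) :
    kCenterCost n z x H ≤ kCenterCost n z y H + δ := by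
  have h : kCenterCost n z x H - δ ≤ kCenterCost n z y H := by
    refine le_csInf (kCenter_set_nonempty n z hz y H hH) (fun r hr => ?_)
    obtain ⟨I, hcard, hI⟩ := hr
    have hmem : r + δ ∈ {s : ℝ | ∃ I : Finset (Fin n), n - z ≤ I.card ∧
        ∀ i ∈ I, ∃ c ∈ H, dist (x i) c ≤ s} := by
      refine ⟨I, hcard, fun i hi => ?_⟩
      obtain ⟨c, hcH, hc⟩ := hI i hi
      refine ⟨c, hcH, ?_⟩
      calc dist (x i) c ≤ dist (x i) (y i) + dist (y i) c := dist_triangle _ _ _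
        _ ≤ δ + r := add_le_add (hxy i) hc
        _ = r + δ := add_comm _ _
    have := csInf_le (kCenter_set_bdd n z hz x H) hmem
    unfold kCenterCost
    linarith
  linarith

/-- The perturbation stability at the core of Theorem 7 of the paper: if the two point
families `x` and `y` satisfy `dist (x i) (y i) ≤ δ` for all `i`, then for every
nonempty finite center set `H` the `k`-center-with-`z`-outliers costs differ by at
most `δ`. -/
theorem kCenterCost_perturbation {M : Type*} [MetricSpace M]
    (n z : ℕ) (hz : z < n) (δ : ℝ) (hδ : 0 ≤ δ)
    (x y : Fin n → M) (hxy : ∀ i : Fin n, dist (x i) (y i) ≤ δ) :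
    ∀ H : Finset M, H.Nonempty →
      |kCenterCost n z x H - kCenterCost n z y H| ≤ δ := by
  intro H hH
  have h1 := kCenterCost_le n z hz δ x y hxy H hH
  have h2 := kCenterCost_le n z hz δ y x (fun i => by rw [dist_comm]; exact hxy i) H hH
  rw [abs_le]
  constructor <;> linarith
end

section
/- Let M be a metric space, X a finite subset of M, O ⊆ X, k ≥ 1, c : Fin k → M a family of centers, and r ≥ 0 such that X \ O ⊆ ⋃_{j} closedBall(c_j, r). Then for every subset Y ⊆ X there exists a set H ⊆ Y \ O with |H| ≤ k such that every point p ∈ Y \ O satisfies min_{q ∈ H} d(p, q) ≤ 2r. -/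
/-- Lemma 3 ('cl-distributed') of the paper: if the inliers `X \ O` are covered by `k`
balls of radius `r`, then for every subset `Y ⊆ X` there are at most `k` surrogate
centers `H ⊆ Y \ O` such that every point of `Y \ O` is within distance `2r` of `H`. -/
theorem surrogate_centers_two_approx {M : Type*} [MetricSpace M] [DecidableEq M]
    (X O : Finset M) (hO : O ⊆ X) (k : ℕ) (hk : 1 ≤ k)
    (c : Fin k → M) (r : ℝ) (hr : 0 ≤ r)
    (hcover : ∀ p ∈ X \ O, ∃ j : Fin k, dist p (c j) ≤ r) :
    ∀ Y : Finset M, Y ⊆ X →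
      ∃ H : Finset M, H ⊆ Y \ O ∧ H.card ≤ k ∧
        ∀ p ∈ Y \ O, ∃ q ∈ H, dist p q ≤ 2 * r := by
  intro Y hY
  classical
  set S := Y \ O with hS
  -- for each j with a representative in S near c j, pick one
  let P : Fin k → Prop := fun j => ∃ q ∈ S, dist q (c j) ≤ r
  let g : Fin k → M := fun j =>
    if h : P j then h.choose else Classical.arbitrary (PLift True) |>.down |> fun _ =>
      (c j)
  refine ⟨(Finset.univ.filter fun j => P j).image g, ?_, ?_, ?_⟩
  · intro x hx
    simp only [Finset.mem_image, Finset.mem_filter] at hx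
    obtain ⟨j, ⟨_, hj⟩, rfl⟩ := hx
    simp only [g, dif_pos hj]
    exact hj.choose_spec.1
  · exact (Finset.card_image_le).trans ((Finset.card_filter_le _ _).trans (by simp))
  · intro p hp
    have hpX : p ∈ X \ O := by
      rw [Finset.mem_sdiff] at hp ⊢
      exact ⟨hY hp.1, hp.2⟩
    obtain ⟨j, hj⟩ := hcover p hpX
    have hPj : P j := ⟨p, hp, hj⟩
    refine ⟨g j, Finset.mem_image_of_mem g (by simp [hPj]), ?_⟩
    have hq := hPj.choose_spec.2
    calc dist p (g j) ≤ dist p (c j) + dist (c j) (g j) := dist_triangle _ _ _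
      _ ≤ r + r := by
          refine add_le_add hj ?_
          rw [dist_comm]
          simpa only [g, dif_pos hPj] using hq
      _ = 2 * r := by ring
end

section
/- Let s ≥ 1 and z ≥ 1 be integers, and for each i ∈ Fin s let h_i : {0,1,…,z} → ℝ be non-increasing. Order pairs in ℝ × Fin s lexicographically: (a, i) ≺ (b, j) iff a < b, or a = b and i < j. Let (q₀, i₀) ∈ {0,…,z} × Fin s be such that exactly 2z index pairs (i, q) ∈ Fin s × {0,…,z} satisfy [ (h_{i₀}(q₀), i₀) ≺ (h_i(q), i) ] or [ i = i₀ and h_{i₀}(q) = h_{i₀}(q₀) and q < q₀ ] (i.e., (h_{i₀}(q₀), i₀) is the (2z+1)-th largest item in the lexicographically decreasing sorted sequence of the s(z+1) pairs, with ties at site i₀ broken by increasing q). For i ≠ i₀ define z_i = min{ q ∈ {0,…,z} : (h_i(q), i) ≺ (h_{i₀}(q₀), i₀) } if this set is nonempty and z_i = z otherwise; define z_{i₀} = min{ q ∈ {0,…,z} : h_{i₀}(q) = h_{i₀}(q₀) }. Then Σ_{i=1}^{s} z_i ≤ 2z and (z_1, …, z_s) minimizes max_{1≤i≤s} h_i(q_i)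 over all (q_1, …, q_s) ∈ {0,…,z}^s with Σ_{i=1}^{s} q_i ≤ 2z. -/
open Finset
open scoped Classical

/-- The lexicographic order on pairs `(value, site index)` used by the central server in
Algorithm 6 of the paper. -/
def lexLt {s : ℕ} (p q : ℝ × Fin s) : Prop :=
  p.1 < q.1 ∨ (p.1 = q.1 ∧ p.2 < q.2)

/-- The set of budgets `q` at site `i` whose pair `(h i q, i)` ranks strictly above the
broadcast pair (with the tie-breaking rule at site `i₀`). -/
noncomputable def rowSet (s z : ℕ) (h : Fin s → ℕ → ℝ) (i₀ : Fin s) (q₀ : ℕ)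
    (i : Fin s) : Finset ℕ :=
  (Finset.range (z + 1)).filter (fun q =>
    lexLt (h i₀ q₀, i₀) (h i q, i) ∨ (i = i₀ ∧ h i q = h i₀ q₀ ∧ q < q₀))

lemma rowSet_sum (s z : ℕ) (h : Fin s → ℕ → ℝ) (i₀ : Fin s) (q₀ : ℕ) :
    ∑ i : Fin s, (rowSet s z h i₀ q₀ i).card =
      (((Finset.univ : Finset (Fin s)) ×ˢ Finset.range (z + 1)).filter
        fun p : Fin s × ℕ =>
          lexLt (h i₀ q₀, i₀) (h p.1 p.2, p.1) ∨
            (p.1 = i₀ ∧ h p.1 p.2 = h i₀ q₀ ∧ p.2 < q₀)).card := by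
  rw [Finset.card_filter, Finset.sum_product]
  refine Finset.sum_congr rfl fun i _ => ?_
  rw [rowSet, Finset.card_filter]

lemma lexLt_compl {s : ℕ} {i i₀ : Fin s} (hne : i ≠ i₀) {a b : ℝ}
    (hnl : ¬ lexLt (a, i) (b, i₀)) : b < a ∨ (b = a ∧ i₀ < i) := by
  rcases lt_trichotomy a b with hlt | heq | hgt
  · exact absurd (Or.inl hlt) hnl
  · rcases lt_or_gt_of_ne hne with hio | hio
    · exact absurd (Or.inr ⟨heq, hio⟩) hnl
    · exact Or.inr ⟨heq.symm, hio⟩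
  · exact Or.inl hgt

/-- Lemma 4 ('lem-guess') of the paper: the per-site outlier budgets `zf i` derived from
the `(2z+1)`-th lexicographically largest pair `(h i₀ q₀, i₀)` sum to at most `2z` and
minimize `max_i h i (q i)` over all budgets `q : Fin s → {0,…,z}` with `Σ q i ≤ 2z`. -/
theorem distributed_budget_minimax (s z : ℕ) (hs : 1 ≤ s) (hz : 1 ≤ z)
    (hsne : (Finset.univ : Finset (Fin s)).Nonempty)
    (h : Fin s → ℕ → ℝ)
    (hmono : ∀ i : Fin s, ∀ q q' : ℕ, q ≤ q' → q' ≤ z → h i q' ≤ h i q)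
    (i₀ : Fin s) (q₀ : ℕ) (hq₀ : q₀ ≤ z)
    (hrank : (((Finset.univ : Finset (Fin s)) ×ˢ Finset.range (z + 1)).filter
        fun p : Fin s × ℕ =>
          lexLt (h i₀ q₀, i₀) (h p.1 p.2, p.1) ∨
            (p.1 = i₀ ∧ h p.1 p.2 = h i₀ q₀ ∧ p.2 < q₀)).card = 2 * z)
    (zf : Fin s → ℕ)
    (hzf₁ : ∀ i : Fin s, i ≠ i₀ →
      (∃ q ≤ z, lexLt (h i q, i) (h i₀ q₀, i₀)) →
        zf i = sInf {q : ℕ | q ≤ z ∧ lexLt (h i q, i) (h i₀ q₀, i₀)})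
    (hzf₂ : ∀ i : Fin s, i ≠ i₀ →
      (¬ ∃ q ≤ z, lexLt (h i q, i) (h i₀ q₀, i₀)) → zf i = z)
    (hzf₀ : zf i₀ = sInf {q : ℕ | q ≤ z ∧ h i₀ q = h i₀ q₀}) :
    (∑ i : Fin s, zf i) ≤ 2 * z ∧
      ∀ qf : Fin s → ℕ, (∀ i, qf i ≤ z) → (∑ i : Fin s, qf i) ≤ 2 * z →
        (Finset.univ.sup' hsne fun i => h i (zf i)) ≤
          Finset.univ.sup' hsne fun i => h i (qf i) := by
  classical
  have hmem : ∀ i q, q ∈ rowSet s z h i₀ q₀ i ↔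
      q ≤ z ∧ (lexLt (h i₀ q₀, i₀) (h i q, i) ∨ (i = i₀ ∧ h i q = h i₀ q₀ ∧ q < q₀)) := by
    intro i q
    simp [rowSet, Nat.lt_succ_iff]
  have hsum : ∑ i : Fin s, (rowSet s z h i₀ q₀ i).card = 2 * z := by
    rw [rowSet_sum]; exact hrank
  have hrow0 : rowSet s z h i₀ q₀ i₀ = Finset.range q₀ := by
    ext q
    rw [hmem, Finset.mem_range]
    constructor
    · rintro ⟨hq1, hcase⟩
      rcases hcase with (hlt | ⟨heq, hii⟩) | ⟨-, heq, hlt'⟩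
      · by_contra hq'
        push_neg at hq'
        exact absurd hlt (not_lt.mpr (hmono i₀ q₀ q hq' hq1))
      · exact absurd hii (lt_irrefl _)
      · exact hlt'
    · intro hq
      have hqz : q ≤ z := le_trans hq.le hq₀
      refine ⟨hqz, ?_⟩
      have h1 : h i₀ q₀ ≤ h i₀ q := hmono i₀ q q₀ hq.le hq₀
      rcases eq_or_lt_of_le h1 with heq | hlt
      · exact Or.inr ⟨rfl, heq.symm, hq⟩
      · exact Or.inl (Or.inl hlt)
  -- Part 1: each site's budget is bounded by its row count
  have hle : ∀ i : Fin s, zf i ≤ (rowSet s z h i₀ q₀ i).card := by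
    intro i
    by_cases hii : i = i₀
    · subst hii
      rw [hzf₀, hrow0, Finset.card_range]
      exact Nat.sInf_le ⟨hq₀, rfl⟩
    · by_cases hex : ∃ q ≤ z, lexLt (h i q, i) (h i₀ q₀, i₀)
      · rw [hzf₁ i hii hex]
        have hSne : {q : ℕ | q ≤ z ∧ lexLt (h i q, i) (h i₀ q₀, i₀)}.Nonempty := by
          obtain ⟨q, hq1, hq2⟩ := hex; exact ⟨q, hq1, hq2⟩
        have hInf := Nat.sInf_mem hSne
        have hsub : Finset.range
            (sInf {q : ℕ | q ≤ z ∧ lexLt (h i q, i) (h i₀ q₀, i₀)}) ⊆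
            rowSet s z h i₀ q₀ i := by
          intro q hq
          rw [Finset.mem_range] at hq
          have hqz : q ≤ z := le_trans (le_of_lt hq) hInf.1
          have hnot : q ∉ {q : ℕ | q ≤ z ∧ lexLt (h i q, i) (h i₀ q₀, i₀)} :=
            Nat.notMem_of_lt_sInf hq
          have hnl : ¬ lexLt (h i q, i) (h i₀ q₀, i₀) := fun hl => hnot ⟨hqz, hl⟩
          rw [hmem]
          refine ⟨hqz, Or.inl ?_⟩
          rcases lexLt_compl hii hnl with hlt | ⟨heq, hio⟩
          · exact Or.inl hlt
          · exact Or.inr ⟨heq, hio⟩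
        have := Finset.card_le_card hsub
        rwa [Finset.card_range] at this
      · rw [hzf₂ i hii hex]
        push_neg at hex
        have hall : Finset.range (z + 1) ⊆ rowSet s z h i₀ q₀ i := by
          intro q hq
          rw [Finset.mem_range, Nat.lt_succ_iff] at hq
          have hnl : ¬ lexLt (h i q, i) (h i₀ q₀, i₀) := hex q hq
          rw [hmem]
          refine ⟨hq, Or.inl ?_⟩
          rcases lexLt_compl hii hnl with hlt | ⟨heq, hio⟩
          · exact Or.inl hlt
          · exact Or.inr ⟨heq, hio⟩
        have := Finset.card_le_card hall
        rw [Finset.card_range] at this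
        omega
  have hpart1 : (∑ i : Fin s, zf i) ≤ 2 * z := by
    calc (∑ i : Fin s, zf i) ≤ ∑ i : Fin s, (rowSet s z h i₀ q₀ i).card :=
          Finset.sum_le_sum fun i _ => hle i
      _ = 2 * z := hsum
  refine ⟨hpart1, ?_⟩
  -- Part 2: optimality
  intro qf hqfle hqfsum
  rw [Finset.sup'_le_iff]
  intro j _
  by_cases hbig : j ≠ i₀ ∧ ¬ ∃ q ≤ z, lexLt (h j q, j) (h i₀ q₀, i₀)
  · rw [hzf₂ j hbig.1 hbig.2]
    exact le_trans (hmono j (qf j) z (hqfle j) le_rfl)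
      (Finset.le_sup' (fun i => h i (qf i)) (Finset.mem_univ j))
  · -- the value at site j is at most h i₀ q₀
    have hjc : h j (zf j) ≤ h i₀ q₀ := by
      by_cases hji : j = i₀
      · subst hji
        rw [hzf₀]
        have hSne : {q : ℕ | q ≤ z ∧ h j q = h j q₀}.Nonempty := ⟨q₀, hq₀, rfl⟩
        exact le_of_eq (Nat.sInf_mem hSne).2
      · have hex : ∃ q ≤ z, lexLt (h j q, j) (h i₀ q₀, i₀) := by
          by_contra hno
          exact hbig ⟨hji, hno⟩
        rw [hzf₁ j hji hex]
        have hSne : {q : ℕ | q ≤ z ∧ lexLt (h j q, j) (h i₀ q₀, i₀)}.Nonempty := by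
          obtain ⟨q, hq1, hq2⟩ := hex; exact ⟨q, hq1, hq2⟩
        rcases (Nat.sInf_mem hSne).2 with hlt | ⟨heq, -⟩
        · exact le_of_lt hlt
        · exact le_of_eq heq
    refine le_trans hjc ?_
    by_contra hcon
    push_neg at hcon
    have hall : ∀ i : Fin s, h i (qf i) < h i₀ q₀ := fun i =>
      lt_of_le_of_lt (Finset.le_sup' (fun i => h i (qf i)) (Finset.mem_univ i)) hcon
    have hcardle : ∀ i : Fin s, (rowSet s z h i₀ q₀ i).card ≤ qf i := by
      intro i
      have hsub : rowSet s z h i₀ q₀ i ⊆ Finset.range (qf i) := by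
        intro q hq
        rw [hmem] at hq
        rw [Finset.mem_range]
        by_contra hge
        push_neg at hge
        have h1 : h i q ≤ h i (qf i) := hmono i (qf i) q hge hq.1
        have h2 : h i q < h i₀ q₀ := lt_of_le_of_lt h1 (hall i)
        rcases hq.2 with (hlt | ⟨heq, -⟩) | ⟨-, heq, -⟩
        · exact absurd hlt (not_lt.mpr (le_of_lt h2))
        · exact absurd heq (ne_of_gt h2)
        · exact absurd heq (ne_of_lt h2)
      have := Finset.card_le_card hsub
      rwa [Finset.card_range] at this
    have hstrict : (rowSet s z h i₀ q₀ i₀).card < qf i₀ := by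
      rw [hrow0, Finset.card_range]
      by_contra hge
      push_neg at hge
      have h1 : h i₀ q₀ ≤ h i₀ (qf i₀) := hmono i₀ (qf i₀) q₀ hge hq₀
      exact absurd (lt_of_le_of_lt h1 (hall i₀)) (lt_irrefl _)
    have hlt2 : 2 * z < ∑ i : Fin s, qf i := by
      rw [← hsum]
      exact Finset.sum_lt_sum (fun i _ => hcardle i) ⟨i₀, Finset.mem_univ i₀, hstrict⟩
    omega
end
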